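/- Let d_1, d_2, d_3, d_4 be a basis of (ZMod 3)^4 and set d_i' = -d_i (so each pair {d_i, d_i'} is a 0-line). A tenth pair {d_5, -d_5} extends these eight points to a demicap with anchor 0 if and only if d_5 = c_1 d_1 + c_2 d_2 + c_3 d_3 + c_4 d_4 with each c_i ∈ {1, -1}; consequently, exactly eight pairs {d_5, -d_5} work. -/

import Mathlib

abbrev V4 := Fin 4 → ZMod 3

def IsCap (C : Set V4) : Prop :=
  ∀ a ∈ C, ∀ b ∈ C, ∀ c ∈ C, a ≠ b → a ≠ c → b ≠ c → a + b + c ≠ 0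

/-- The ten points `{d i, -d i}` of five 0-lines. -/
def demiSet (d : Fin 5 → V4) : Set V4 :=
  Set.range d ∪ Set.range fun i => -(d i)

/-- The five pairs `{d i, -d i}` form a demicap with anchor 0. -/
def IsDemicap0 (d : Fin 5 → V4) : Prop :=
  (demiSet d).ncard = 10 ∧ IsCap (demiSet d) ∧
  ¬ ∃ s : Finset (Fin 5), s.card = 4 ∧
    ∃ W : Submodule (ZMod 3) V4, Module.finrank (ZMod 3) W = 3 ∧ ∀ i ∈ s, d i ∈ W

/-! ### Auxiliary definitions -/

/-- The standard basis vectors of `V4`. -/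
def E4 : Fin 4 → V4 := fun i j => if i = j then 1 else 0

/-- The vector with coordinates `±1` given by a sign pattern. -/
def yc (b : Fin 4 → Bool) : V4 := fun i => if b i then 1 else -1

/-- The ten points of the candidate demicap, indexed by `Fin 5 ⊕ Fin 5`. -/
def pts (y : V4) : Fin 5 ⊕ Fin 5 → V4 :=
  Sum.elim (Fin.snoc E4 y) (fun i => -((Fin.snoc E4 y : Fin 5 → V4) i))

/-- The "four lines in a hyperplane" condition. -/
def Hyp (d : Fin 5 → V4) : Prop :=
  ∃ s : Finset (Fin 5), s.card = 4 ∧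
    ∃ W : Submodule (ZMod 3) V4, Module.finrank (ZMod 3) W = 3 ∧ ∀ i ∈ s, d i ∈ W

lemma isDemicap0_iff (d : Fin 5 → V4) :
    IsDemicap0 d ↔ (demiSet d).ncard = 10 ∧ IsCap (demiSet d) ∧ ¬ Hyp d := Iff.rfl

/-! ### The key computation -/

set_option synthInstance.maxSize 2000 in
set_option maxRecDepth 100000 in
set_option maxHeartbeats 4000000 in
lemma key : ∀ b : Fin 4 → Bool,
    (∀ z w, pts (yc b) z = pts (yc b) w → z = w) ∧
    (∀ z₁ z₂ z₃, z₁ ≠ z₂ → z₁ ≠ z₃ → z₂ ≠ z₃ →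
      pts (yc b) z₁ + pts (yc b) z₂ + pts (yc b) z₃ ≠ 0) := by
  decide

lemma zmod3_cases : ∀ a : ZMod 3, a ≠ 0 → a = 1 ∨ a = -1 := by decide

lemma finrank_V4 : Module.finrank (ZMod 3) V4 = 4 := by
  rw [Module.finrank_pi]; simp

/-! ### Transport along a linear equivalence -/

lemma demiSet_comp (e : V4 ≃ₗ[ZMod 3] V4) (d : Fin 5 → V4) :
    demiSet (⇑e ∘ d) = ⇑e '' demiSet d := by
  have h : (fun i => -((⇑e ∘ d) i)) = ⇑e ∘ fun i => -(d i) := by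
    funext i; simp
  rw [demiSet, demiSet, Set.image_union, Set.range_comp, h, Set.range_comp]

lemma isCap_image (e : V4 ≃ₗ[ZMod 3] V4) (C : Set V4) : IsCap (⇑e '' C) ↔ IsCap C := by
  constructor
  · intro h a ha b hb c hc hab hac hbc hs
    exact h _ ⟨a, ha, rfl⟩ _ ⟨b, hb, rfl⟩ _ ⟨c, hc, rfl⟩
      (fun hh => hab (e.injective hh)) (fun hh => hac (e.injective hh))
      (fun hh => hbc (e.injective hh))
      (by rw [← map_add, ← map_add, hs, map_zero])
  · rintro h - ⟨a, ha, rfl⟩ - ⟨b, hb, rfl⟩ - ⟨c, hc, rfl⟩ hab hac hbc hs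
    refine h a ha b hb c hc (fun hh => hab (by rw [hh])) (fun hh => hac (by rw [hh]))
      (fun hh => hbc (by rw [hh])) ?_
    apply e.injective
    rw [map_add, map_add, hs, map_zero]

lemma hyp_comp (e : V4 ≃ₗ[ZMod 3] V4) (d : Fin 5 → V4) (h : Hyp d) : Hyp (⇑e ∘ d) := by
  obtain ⟨s, hs, W, hW, hmem⟩ := h
  exact ⟨s, hs, W.map (e : V4 →ₗ[ZMod 3] V4),
    (LinearEquiv.finrank_map_eq e W).trans hW,
    fun i hi => Submodule.mem_map_of_mem (hmem i hi)⟩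

lemma hyp_iff (e : V4 ≃ₗ[ZMod 3] V4) (d : Fin 5 → V4) : Hyp (⇑e ∘ d) ↔ Hyp d := by
  refine ⟨fun h => ?_, hyp_comp e d⟩
  have h2 := hyp_comp e.symm _ h
  have h3 : ⇑e.symm ∘ (⇑e ∘ d) = d := by funext i; simp
  rwa [h3] at h2

lemma demicap_comp (e : V4 ≃ₗ[ZMod 3] V4) (d : Fin 5 → V4) :
    IsDemicap0 (⇑e ∘ d) ↔ IsDemicap0 d := by
  rw [isDemicap0_iff, isDemicap0_iff, demiSet_comp,
    Set.ncard_image_of_injective _ e.injective, isCap_image, hyp_iff]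

/-! ### The standard-basis case -/

lemma demiSet_snoc (y : V4) : demiSet (Fin.snoc E4 y) = Set.range (pts y) := by
  rw [demiSet, pts, Set.Sum.elim_range]

lemma proj_ker_rank (i : Fin 4) : Module.finrank (ZMod 3)
    (LinearMap.ker (LinearMap.proj i : V4 →ₗ[ZMod 3] ZMod 3)) = 3 := by
  have hsurj : Function.Surjective (LinearMap.proj i : V4 →ₗ[ZMod 3] ZMod 3) :=
    fun a => ⟨fun _ => a, rfl⟩
  have h := LinearMap.finrank_range_add_finrank_ker
    (LinearMap.proj i : V4 →ₗ[ZMod 3] ZMod 3)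
  rw [LinearMap.range_eq_top.mpr hsurj, finrank_top, Module.finrank_self] at h
  have h4 : Module.finrank (ZMod 3) V4 = 4 := by rw [Module.finrank_pi]; simp
  rw [h4] at h
  omega

lemma hyp_of_coord_zero (y : V4) (i : Fin 4) (h0 : y i = 0) : Hyp (Fin.snoc E4 y) := by
  refine ⟨{i.castSucc}ᶜ, ?_, LinearMap.ker
    (LinearMap.proj i : V4 →ₗ[ZMod 3] ZMod 3), ?_, ?_⟩
  · rw [Finset.card_compl]; simp
  · exact proj_ker_rank i
  · intro j hj
    have hj' : j ≠ i.castSucc := by simpa using hj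
    induction j using Fin.lastCases with
    | last =>
      rw [Fin.snoc_last, LinearMap.mem_ker]
      exact h0
    | cast k =>
      rw [Fin.snoc_castSucc, LinearMap.mem_ker]
      have hki : k ≠ i := fun h => hj' (by rw [h])
      show E4 k i = 0
      simp [E4, hki]

lemma not_hyp (y : V4) (hy : ∀ i, y i ≠ 0) : ¬ Hyp (Fin.snoc E4 y) := by
  rintro ⟨s, hs, W, hW, hmem⟩
  have hcompl : sᶜ.card = 1 := by
    rw [Finset.card_compl, hs]; rfl
  obtain ⟨k, hk⟩ := Finset.card_eq_one.mp hcompl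
  have hmem' : ∀ j : Fin 5, j ≠ k → (Fin.snoc E4 y : Fin 5 → V4) j ∈ W := by
    intro j hj
    apply hmem
    have : j ∉ sᶜ := by rw [hk]; simpa using hj
    simpa using this
  have hEW : ∀ i : Fin 4, E4 i ∈ W := by
    induction k using Fin.lastCases with
    | last =>
      intro i
      have := hmem' i.castSucc (Fin.castSucc_lt_last i).ne
      rwa [Fin.snoc_castSucc] at this
    | cast i₀ =>
      have hyW : y ∈ W := by
        have := hmem' (Fin.last 4) (Fin.castSucc_lt_last i₀).ne'
        rwa [Fin.snoc_last] at this
      have hEW' : ∀ j : Fin 4, j ≠ i₀ → E4 j ∈ W := by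
        intro j hj
        have := hmem' j.castSucc (by simpa [Fin.castSucc_inj] using hj)
        rwa [Fin.snoc_castSucc] at this
      have hsum : y = y i₀ • E4 i₀ + ∑ j ∈ Finset.univ.erase i₀, y j • E4 j := by
        conv_lhs => rw [pi_eq_sum_univ y]
        rw [← Finset.add_sum_erase _ _ (Finset.mem_univ i₀)]
        rfl
      have h1 : y i₀ • E4 i₀ ∈ W := by
        rw [eq_sub_of_add_eq hsum.symm]
        exact W.sub_mem hyW (Submodule.sum_mem _ fun j hj =>
          W.smul_mem _ (hEW' j (Finset.ne_of_mem_erase hj)))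
      intro i
      rcases eq_or_ne i i₀ with rfl | hne
      · have h3 := W.smul_mem (y i)⁻¹ h1
        rwa [smul_smul, inv_mul_cancel₀ (hy i), one_smul] at h3
      · exact hEW' i hne
  have hWtop : W = ⊤ := by
    rw [eq_top_iff]
    intro v _
    rw [pi_eq_sum_univ v]
    exact Submodule.sum_mem _ fun j _ => W.smul_mem _ (hEW j)
  rw [hWtop, finrank_top, finrank_V4] at hW
  omega

lemma M (y : V4) : IsDemicap0 (Fin.snoc E4 y) ↔ ∀ i, y i ≠ 0 := by
  constructor
  · rintro ⟨-, -, hnh⟩ i hi0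
    exact hnh (hyp_of_coord_zero y i hi0)
  · intro hy
    obtain ⟨b, rfl⟩ : ∃ b : Fin 4 → Bool, y = yc b := by
      refine ⟨fun i => decide (y i = 1), funext fun i => ?_⟩
      rcases zmod3_cases (y i) (hy i) with h | h <;> simp [yc, h] <;> decide
    have hinj : Function.Injective (pts (yc b)) := fun z w => (key b).1 z w
    refine ⟨?_, ?_, not_hyp _ hy⟩
    · rw [demiSet_snoc]
      rw [← Set.image_univ, ← Finset.coe_univ, ← Finset.coe_image,
        Set.ncard_coe_finset, Finset.card_image_of_injective _ hinj]
      simp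
    · rw [demiSet_snoc]
      rintro - ⟨z₁, rfl⟩ - ⟨z₂, rfl⟩ - ⟨z₃, rfl⟩ h12 h13 h23
      exact (key b).2 z₁ z₂ z₃ (fun h => h12 (by rw [h])) (fun h => h13 (by rw [h]))
        (fun h => h23 (by rw [h]))

/-! ### Main theorem -/

lemma main_coord (bas : Module.Basis (Fin 4) (ZMod 3) V4) (x : V4) :
    IsDemicap0 (Fin.snoc (fun i => bas i) x) ↔ ∀ i, bas.equivFun x i ≠ 0 := by
  have hE : (⇑bas.equivFun ∘ fun i => bas i) = E4 := by
    funext i j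
    exact bas.equivFun_self i j
  rw [← demicap_comp bas.equivFun, Fin.comp_snoc, hE, M]

/-- Given a basis `d₁,…,d₄` (with pairs `{dᵢ, -dᵢ}`), a fifth pair `{x, -x}`
extends them to a demicap with anchor 0 iff `x = Σ cᵢ dᵢ` with each `cᵢ = ±1`;
consequently exactly eight pairs work. -/
theorem extend_basis_to_demicap (bas : Module.Basis (Fin 4) (ZMod 3) V4) :
    (∀ x : V4,
        IsDemicap0 (Fin.snoc (fun i => bas i) x) ↔
          ∃ c : Fin 4 → ZMod 3, (∀ i, c i = 1 ∨ c i = -1) ∧ x = ∑ i, c i • bas i) ∧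
    {P : Set V4 | ∃ x : V4,
        IsDemicap0 (Fin.snoc (fun i => bas i) x) ∧ P = {x, -x}}.ncard = 8 := by
  have part1 : ∀ x : V4,
      IsDemicap0 (Fin.snoc (fun i => bas i) x) ↔
        ∃ c : Fin 4 → ZMod 3, (∀ i, c i = 1 ∨ c i = -1) ∧ x = ∑ i, c i • bas i := by
    intro x
    rw [main_coord]
    constructor
    · intro h
      exact ⟨bas.equivFun x, fun i => zmod3_cases _ (h i), (bas.sum_equivFun x).symm⟩
    · rintro ⟨c, hc, rfl⟩ i
      have hre : bas.equivFun (∑ j, c j • bas j) i = c i := by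
        rw [bas.equivFun_apply, bas.repr_sum_self]
      rw [hre]
      rcases hc i with h | h <;> rw [h] <;> decide
  refine ⟨part1, ?_⟩
  classical
  set eF := bas.equivFun with heF
  have part1' : ∀ x : V4, IsDemicap0 (Fin.snoc (fun i => bas i) x) ↔ ∀ i, eF x i ≠ 0 :=
    fun x => main_coord bas x
  have hset : {P : Set V4 | ∃ x, IsDemicap0 (Fin.snoc (fun i => bas i) x) ∧ P = {x, -x}}
      = (fun x : V4 => ({x, -x} : Set V4)) '' {x | (∀ i, eF x i ≠ 0) ∧ eF x 0 = 1} := by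
    ext P
    simp only [Set.mem_setOf_eq, Set.mem_image]
    constructor
    · rintro ⟨x, hx, rfl⟩
      rw [part1'] at hx
      rcases zmod3_cases (eF x 0) (hx 0) with h | h
      · exact ⟨x, ⟨hx, h⟩, rfl⟩
      · refine ⟨-x, ⟨fun i => ?_, ?_⟩, ?_⟩
        · rw [map_neg, Pi.neg_apply]
          exact neg_ne_zero.mpr (hx i)
        · rw [map_neg, Pi.neg_apply, h]
          decide
        · show ({-x, -(-x)} : Set V4) = {x, -x}
          rw [neg_neg]
          exact Set.pair_comm (-x) x
    · rintro ⟨x, ⟨hx, h0⟩, rfl⟩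
      exact ⟨x, (part1' x).mpr hx, rfl⟩
  have hinj : Set.InjOn (fun x : V4 => ({x, -x} : Set V4))
      {x | (∀ i, eF x i ≠ 0) ∧ eF x 0 = 1} := by
    rintro x ⟨hx, hx0⟩ x' ⟨hx', hx0'⟩ hEq
    simp only at hEq
    have hmem : x ∈ ({x', -x'} : Set V4) := by
      rw [← hEq]; exact Set.mem_insert _ _
    rcases Set.mem_insert_iff.mp hmem with rfl | hmem2
    · rfl
    · exfalso
      rw [Set.mem_singleton_iff] at hmem2
      subst hmem2
      rw [map_neg, Pi.neg_apply, hx0'] at hx0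
      exact absurd hx0 (by decide)
  have hpre : {x : V4 | (∀ i, eF x i ≠ 0) ∧ eF x 0 = 1}
      = ⇑eF.symm '' {y : V4 | (∀ i, y i ≠ 0) ∧ y 0 = 1} := by
    ext x
    constructor
    · intro hx
      exact ⟨eF x, hx, eF.symm_apply_apply x⟩
    · rintro ⟨y, hy, rfl⟩
      simpa [eF.apply_symm_apply] using hy
  have hfin : {y : V4 | (∀ i, y i ≠ 0) ∧ y 0 = 1}
      = ↑(Finset.univ.filter fun y : V4 => (∀ i, y i ≠ 0) ∧ y 0 = 1) := by
    ext y; simp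
  rw [hset, Set.ncard_image_of_injOn hinj, hpre,
    Set.ncard_image_of_injective _ eF.symm.injective, hfin, Set.ncard_coe_finset]
  decide
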